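/- Let (n11, n12; n21, n22) be a 2×2 complex matrix with determinant n11·n22 − n12·n21 = 1, let ν(u) = (n11·u + n12)/(n21·u + n22) be the associated Möbius transformation and j(u) = n21·u + n22 the automorphy factor. For t, s ∈ ℂ with t ≠ s, j(t) ≠ 0, j(s) ≠ 0, define for each z ∈ ℂ the 2×2 matrices X_{t,s}(z) = [[1, −z/(t − s)], [0, 1]] and X_{ν,t}(z) = [[1, −n21·z/j(t)], [0, 1]]. Then for every z ∈ ℂ, X_{ν(t),ν(s)}(z) = X_{t,s}(j(t)²·z) · (X_{ν,t}(j(t)²·z))⁻¹ as 2×2 complex matrices. -/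

import Mathlib

open Matrix

lemma unipotent_inv (b : ℂ) : (!![1, b; 0, 1] : Matrix (Fin 2) (Fin 2) ℂ)⁻¹ = !![1, -b; 0, 1] := by
  apply Matrix.inv_eq_right_inv
  simp [Matrix.mul_fin_two, Matrix.one_fin_two]

/-- Compatibility (equation (4.7)) between the anti-holomorphic completion operator
`X_{t,s}(z) = [[1, −z/(t − s)], [0, 1]]` and the analytic continuation operator
`X_{ν,t}(z) = [[1, −n21·z/j(t)], [0, 1]]` under the monodromy Möbius transformation
`ν(u) = (n11·u + n12)/(n21·u + n22)` with automorphy factor `j(u) = n21·u + n22`. -/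
theorem antiholomorphic_completion_matrix_identity
    (n11 n12 n21 n22 : ℂ) (hdet : n11 * n22 - n12 * n21 = 1)
    (ν : ℂ → ℂ) (hν : ∀ u, ν u = (n11 * u + n12) / (n21 * u + n22))
    (j : ℂ → ℂ) (hj : ∀ u, j u = n21 * u + n22)
    (t s : ℂ) (hts : t ≠ s) (hjt : j t ≠ 0) (hjs : j s ≠ 0)
    (X : ℂ → ℂ → ℂ → Matrix (Fin 2) (Fin 2) ℂ)
    (hX : ∀ a b z, X a b z = !![1, -z / (a - b); 0, 1])
    (Xν : ℂ → ℂ → Matrix (Fin 2) (Fin 2) ℂ)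
    (hXν : ∀ a z, Xν a z = !![1, -n21 * z / j a; 0, 1]) :
    ∀ z : ℂ, X (ν t) (ν s) z = X t s ((j t) ^ 2 * z) * (Xν t ((j t) ^ 2 * z))⁻¹ := by
  intro z
  have hjt' : n21 * t + n22 ≠ 0 := by rwa [hj] at hjt
  have hjs' : n21 * s + n22 ≠ 0 := by rwa [hj] at hjs
  have hts' : t - s ≠ 0 := sub_ne_zero.mpr hts
  rw [hX, hX, hXν, unipotent_inv, hj]
  rw [Matrix.mul_fin_two]
  have hdiff : ν t - ν s = (t - s) / ((n21 * t + n22) * (n21 * s + n22)) := by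
    rw [hν, hν]
    rw [div_sub_div _ _ hjt' hjs', div_eq_div_iff (mul_ne_zero hjt' hjs') (mul_ne_zero hjt' hjs')]
    linear_combination (t - s) * ((n21 * t + n22) * (n21 * s + n22)) * hdet
  have key : -z / (ν t - ν s) =
      1 * -(-n21 * ((n21 * t + n22) ^ 2 * z) / (n21 * t + n22)) +
        -((n21 * t + n22) ^ 2 * z) / (t - s) * 1 := by
    rw [hdiff, div_div_eq_mul_div]
    field_simp
    ring
  rw [key]
  norm_num
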